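/- Let Ω ⊂ ℝ^N be a bounded open set and let u : Ω → ℝ be measurable. Then |λ({x ∈ Ω : u(x) > 0}) − λ({x ∈ Ω : u(x) < 0})| ≤ λ({x ∈ Ω : u(x) = 0}) holds if and only if for every c > 0 one has ∫_Ω sgn(u(x)−c) dx ≤ 0 ≤ ∫_Ω sgn(u(x)+c) dx. -/

import Mathlib

open MeasureTheory Set
open Filter Topology


lemma integral_sign_eq {α : Type*} [MeasurableSpace α] (μ : Measure α)
    (s : Set α) (hfin : μ s ≠ ⊤) (u : α → ℝ) (hu : Measurable u) (c : ℝ) :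
    (∫ x in s, Real.sign (u x - c) ∂μ)
      = (μ {x ∈ s | c < u x}).toReal - (μ {x ∈ s | u x < c}).toReal := by
  have hA : MeasurableSet {x | c < u x} := measurableSet_lt measurable_const hu
  have hB : MeasurableSet {x | u x < c} := measurableSet_lt hu measurable_const
  have hfm : IsFiniteMeasure (μ.restrict s) :=
    ⟨by simpa [Measure.restrict_apply_univ] using hfin.lt_top⟩
  have hpt : ∀ x, Real.sign (u x - c)
      = ({x | c < u x}).indicator (fun _ => (1:ℝ)) x
        - ({x | u x < c}).indicator (fun _ => (1:ℝ)) x := by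
    intro x
    rcases lt_trichotomy (u x) c with h | h | h
    · simp [Real.sign_of_neg (by linarith : u x - c < 0), indicator_apply,
        h, not_lt.mpr h.le]
    · simp [h, Real.sign_zero, indicator_apply]
    · simp [Real.sign_of_pos (by linarith : 0 < u x - c), indicator_apply,
        h, not_lt.mpr h.le]
  have hiA : Integrable (({x | c < u x}).indicator (fun _ => (1:ℝ))) (μ.restrict s) :=
    (integrable_const (1:ℝ)).indicator hA
  have hiB : Integrable (({x | u x < c}).indicator (fun _ => (1:ℝ))) (μ.restrict s) :=
    (integrable_const (1:ℝ)).indicator hB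
  calc (∫ x in s, Real.sign (u x - c) ∂μ)
      = ∫ x in s, (({x | c < u x}).indicator (fun _ => (1:ℝ)) x
          - ({x | u x < c}).indicator (fun _ => (1:ℝ)) x) ∂μ := by
        simp_rw [hpt]
    _ = (∫ x in s, ({x | c < u x}).indicator (fun _ => (1:ℝ)) x ∂μ)
        - ∫ x in s, ({x | u x < c}).indicator (fun _ => (1:ℝ)) x ∂μ :=
        integral_sub hiA hiB
    _ = (μ {x ∈ s | c < u x}).toReal - (μ {x ∈ s | u x < c}).toReal := by
        rw [setIntegral_indicator hA, setIntegral_indicator hB,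
          setIntegral_const, setIntegral_const]
        simp [Set.inter_def]
        rfl



lemma limit_lemma {α : Type*} [MeasurableSpace α] (μ : Measure α)
    (s : Set α) (hs : MeasurableSet s) (hfin : μ s ≠ ⊤)
    (v : α → ℝ) (hv : Measurable v)
    (h : ∀ c : ℝ, 0 < c → (μ {x ∈ s | c < v x}).toReal ≤ (μ {x ∈ s | v x < c}).toReal) :
    (μ {x ∈ s | 0 < v x}).toReal ≤ (μ {x ∈ s | v x ≤ 0}).toReal := by
  set A : ℕ → Set α := fun n => {x ∈ s | 1 / (n + 1 : ℝ) < v x} with hA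
  set B : ℕ → Set α := fun n => {x ∈ s | v x < 1 / (n + 1 : ℝ)} with hB
  have hpos : ∀ n : ℕ, (0:ℝ) < 1 / (n + 1) := fun n => by positivity
  have hmonoA : Monotone A := by
    intro n m hnm x hx
    refine ⟨hx.1, lt_of_le_of_lt ?_ hx.2⟩
    apply one_div_le_one_div_of_le (by positivity)
    have : (n:ℝ) ≤ m := Nat.cast_le.mpr hnm
    linarith
  have hantiB : Antitone B := by
    intro n m hnm x hx
    refine ⟨hx.1, lt_of_lt_of_le hx.2 ?_⟩
    apply one_div_le_one_div_of_le (by positivity)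
    have : (n:ℝ) ≤ m := Nat.cast_le.mpr hnm
    linarith
  have hUA : (⋃ n, A n) = {x ∈ s | 0 < v x} := by
    ext x
    simp only [mem_iUnion, hA, mem_setOf_eq, mem_sep_iff]
    constructor
    · rintro ⟨n, hxs, hn⟩; exact ⟨hxs, lt_trans (hpos n) hn⟩
    · rintro ⟨hxs, hx⟩
      obtain ⟨n, hn⟩ := exists_nat_one_div_lt hx
      exact ⟨n, hxs, hn⟩
  have hIB : (⋂ n, B n) = {x ∈ s | v x ≤ 0} := by
    ext x
    simp only [mem_iInter, hB, mem_setOf_eq, mem_sep_iff]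
    constructor
    · intro hx
      refine ⟨(hx 0).1, ?_⟩
      by_contra hc
      push_neg at hc
      obtain ⟨n, hn⟩ := exists_nat_one_div_lt hc
      exact absurd (hx n).2 (not_lt.mpr hn.le)
    · rintro ⟨hxs, hx⟩ n
      exact ⟨hxs, lt_of_le_of_lt hx (hpos n)⟩
  have heq : ∀ c : ℝ, {x ∈ s | v x < c} = s ∩ v ⁻¹' Iio c := fun c => rfl
  have hmeasB : ∀ n, NullMeasurableSet (B n) μ := by
    intro n
    rw [hB]
    simp only []
    rw [heq]
    exact (hs.inter (hv measurableSet_Iio)).nullMeasurableSet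
  have hAfin : μ (⋃ n, A n) ≠ ⊤ := by
    rw [hUA]; exact fun ht => hfin (top_le_iff.mp (ht ▸ measure_mono (sep_subset _ _)))
  have hBfin : ∀ n, μ (B n) ≠ ⊤ :=
    fun n ht => hfin (top_le_iff.mp (ht ▸ measure_mono (sep_subset _ _)))
  have tA : Tendsto (fun n => (μ (A n)).toReal) atTop (𝓝 ((μ {x ∈ s | 0 < v x}).toReal)) := by
    rw [← hUA]
    exact (ENNReal.tendsto_toReal hAfin).comp (tendsto_measure_iUnion_atTop hmonoA)
  have tB : Tendsto (fun n => (μ (B n)).toReal) atTop (𝓝 ((μ {x ∈ s | v x ≤ 0}).toReal)) := by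
    rw [← hIB]
    have hIfin : μ (⋂ n, B n) ≠ ⊤ :=
      fun ht => hBfin 0 (top_le_iff.mp (ht ▸ measure_mono (iInter_subset _ 0)))
    exact (ENNReal.tendsto_toReal hIfin).comp
      (tendsto_measure_iInter_atTop hmeasB hantiB ⟨0, hBfin 0⟩)
  exact le_of_tendsto_of_tendsto' tA tB (fun n => h _ (hpos n))


/-- For a bounded open `Ω` and measurable `u`, the condition
`|λ({u>0}) - λ({u<0})| ≤ λ({u=0})` holds iff
`∫_Ω sgn(u-c) dx ≤ 0 ≤ ∫_Ω sgn(u+c) dx` for every `c > 0`. -/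
theorem statement17 {N : ℕ} (Ω : Set (EuclideanSpace ℝ (Fin N)))
    (hΩo : IsOpen Ω) (hΩb : Bornology.IsBounded Ω)
    (u : EuclideanSpace ℝ (Fin N) → ℝ) (hu : Measurable u) :
    |(volume {x ∈ Ω | 0 < u x}).toReal - (volume {x ∈ Ω | u x < 0}).toReal|
        ≤ (volume {x ∈ Ω | u x = 0}).toReal
    ↔ ∀ c : ℝ, 0 < c →
        (∫ x in Ω, Real.sign (u x - c)) ≤ 0 ∧ 0 ≤ ∫ x in Ω, Real.sign (u x + c) := by
  have hΩm : MeasurableSet Ω := hΩo.measurableSet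
  have hfin : volume Ω ≠ ⊤ := hΩb.measure_lt_top.ne
  have hsub : ∀ t : Set (EuclideanSpace ℝ (Fin N)), t ⊆ Ω → volume t ≠ ⊤ :=
    fun t hts ht => hfin (top_le_iff.mp (ht ▸ measure_mono hts))
  have tle : ∀ s t : Set (EuclideanSpace ℝ (Fin N)), s ⊆ t → t ⊆ Ω →
      (volume s).toReal ≤ (volume t).toReal :=
    fun s t hst htΩ => ENNReal.toReal_mono (hsub t htΩ) (measure_mono hst)
  have hmz : MeasurableSet {x ∈ Ω | u x = 0} := by
    have : {x ∈ Ω | u x = 0} = Ω ∩ u ⁻¹' {0} := rfl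
    rw [this]; exact hΩm.inter (hu (measurableSet_singleton 0))
  have hsplit1 : (volume {x ∈ Ω | u x ≤ 0}).toReal
      = (volume {x ∈ Ω | u x < 0}).toReal + (volume {x ∈ Ω | u x = 0}).toReal := by
    have hd : Disjoint {x ∈ Ω | u x < 0} {x ∈ Ω | u x = 0} := by
      rw [Set.disjoint_left]; rintro x ⟨_, h1⟩ ⟨_, h2⟩; exact absurd h2 (ne_of_lt h1)
    have hun : {x ∈ Ω | u x ≤ 0} = {x ∈ Ω | u x < 0} ∪ {x ∈ Ω | u x = 0} := by
      ext x
      simp only [mem_sep_iff, mem_union, mem_setOf_eq]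
      constructor
      · rintro ⟨hxΩ, hle⟩
        rcases lt_or_eq_of_le hle with h | h
        · exact Or.inl ⟨hxΩ, h⟩
        · exact Or.inr ⟨hxΩ, h⟩
      · rintro (⟨hxΩ, h⟩ | ⟨hxΩ, h⟩)
        · exact ⟨hxΩ, h.le⟩
        · exact ⟨hxΩ, h.le⟩
    rw [hun, measure_union hd hmz,
      ENNReal.toReal_add (hsub _ (sep_subset _ _)) (hsub _ (sep_subset _ _))]
  have hsplit2 : (volume {x ∈ Ω | 0 ≤ u x}).toReal
      = (volume {x ∈ Ω | 0 < u x}).toReal + (volume {x ∈ Ω | u x = 0}).toReal := by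
    have hd : Disjoint {x ∈ Ω | 0 < u x} {x ∈ Ω | u x = 0} := by
      rw [Set.disjoint_left]; rintro x ⟨_, h1⟩ ⟨_, h2⟩; exact absurd h2 (ne_of_gt h1)
    have hun : {x ∈ Ω | 0 ≤ u x} = {x ∈ Ω | 0 < u x} ∪ {x ∈ Ω | u x = 0} := by
      ext x
      simp only [mem_sep_iff, mem_union, mem_setOf_eq]
      constructor
      · rintro ⟨hxΩ, hle⟩
        rcases lt_or_eq_of_le hle with h | h
        · exact Or.inl ⟨hxΩ, h⟩
        · exact Or.inr ⟨hxΩ, h.symm⟩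
      · rintro (⟨hxΩ, h⟩ | ⟨hxΩ, h⟩)
        · exact ⟨hxΩ, h.le⟩
        · exact ⟨hxΩ, h.ge⟩
    rw [hun, measure_union hd hmz,
      ENNReal.toReal_add (hsub _ (sep_subset _ _)) (hsub _ (sep_subset _ _))]
  have hint1 : ∀ c : ℝ, (∫ x in Ω, Real.sign (u x - c))
      = (volume {x ∈ Ω | c < u x}).toReal - (volume {x ∈ Ω | u x < c}).toReal :=
    fun c => integral_sign_eq volume Ω hfin u hu c
  have hint2 : ∀ c : ℝ, (∫ x in Ω, Real.sign (u x + c))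
      = (volume {x ∈ Ω | -c < u x}).toReal - (volume {x ∈ Ω | u x < -c}).toReal := by
    intro c
    have : (∫ x in Ω, Real.sign (u x + c)) = ∫ x in Ω, Real.sign (u x - (-c)) := by
      simp_rw [sub_neg_eq_add]
    rw [this, integral_sign_eq volume Ω hfin u hu (-c)]
  constructor
  · intro h c hc
    rw [abs_sub_le_iff] at h
    constructor
    · rw [hint1 c, sub_nonpos]
      calc (volume {x ∈ Ω | c < u x}).toReal
          ≤ (volume {x ∈ Ω | 0 < u x}).toReal :=
            tle _ _ (fun x hx => ⟨hx.1, lt_trans hc hx.2⟩) (sep_subset _ _)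
        _ ≤ (volume {x ∈ Ω | u x < 0}).toReal + (volume {x ∈ Ω | u x = 0}).toReal := by
            linarith [h.1]
        _ = (volume {x ∈ Ω | u x ≤ 0}).toReal := hsplit1.symm
        _ ≤ (volume {x ∈ Ω | u x < c}).toReal :=
            tle _ _ (fun x hx => ⟨hx.1, lt_of_le_of_lt hx.2 hc⟩) (sep_subset _ _)
    · rw [hint2 c, sub_nonneg]
      calc (volume {x ∈ Ω | u x < -c}).toReal
          ≤ (volume {x ∈ Ω | u x < 0}).toReal :=
            tle _ _ (fun x hx => ⟨hx.1, lt_trans hx.2 (by linarith)⟩) (sep_subset _ _)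
        _ ≤ (volume {x ∈ Ω | 0 < u x}).toReal + (volume {x ∈ Ω | u x = 0}).toReal := by
            linarith [h.2]
        _ = (volume {x ∈ Ω | 0 ≤ u x}).toReal := hsplit2.symm
        _ ≤ (volume {x ∈ Ω | -c < u x}).toReal :=
            tle _ _ (fun x hx => ⟨hx.1, lt_of_lt_of_le (by linarith) hx.2⟩) (sep_subset _ _)
  · intro h
    rw [abs_sub_le_iff]
    constructor
    · have key : (volume {x ∈ Ω | 0 < u x}).toReal ≤ (volume {x ∈ Ω | u x ≤ 0}).toReal := by
        apply limit_lemma volume Ω hΩm hfin u hu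
        intro c hc
        have := (h c hc).1
        rw [hint1 c, sub_nonpos] at this
        exact this
      rw [hsplit1] at key
      linarith
    · have key : (volume {x ∈ Ω | u x < 0}).toReal ≤ (volume {x ∈ Ω | 0 ≤ u x}).toReal := by
        have e1 : {x ∈ Ω | u x < 0} = {x ∈ Ω | 0 < -u x} := by
          ext x; simp [mem_sep_iff]
        have e2 : {x ∈ Ω | 0 ≤ u x} = {x ∈ Ω | -u x ≤ 0} := by
          ext x; simp [mem_sep_iff]
        rw [e1, e2]
        apply limit_lemma volume Ω hΩm hfin (fun x => -u x) hu.neg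
        intro c hc
        have := (h c hc).2
        rw [hint2 c, sub_nonneg] at this
        have e3 : {x ∈ Ω | c < -u x} = {x ∈ Ω | u x < -c} := by
          ext x; simp only [mem_sep_iff, mem_setOf_eq]; constructor <;>
            (rintro ⟨h1, h2⟩; exact ⟨h1, by linarith⟩)
        have e4 : {x ∈ Ω | -u x < c} = {x ∈ Ω | -c < u x} := by
          ext x; simp only [mem_sep_iff, mem_setOf_eq]; constructor <;>
            (rintro ⟨h1, h2⟩; exact ⟨h1, by linarith⟩)
        rw [e3, e4]
        exact this
      rw [hsplit2] at key
      linarith
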